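/- Let E be a real inner product space and F : E → ℝ be differentiable, μ-strongly convex and L-smooth with 0 < μ and 0 < L, minimized at w* ∈ E. Let Λ > 0 and τ > 0 satisfy Λ·μ > 1 and τ ≥ Λ·L, let t ≥ 1 be a natural number, and set η = Λ/(t + τ). For w ∈ E and e ∈ E define w⁺ = w − η·(∇F(w) − e) and θ = max{ Λ·(t+τ)·‖e‖²/(2·(Λμ − 1)), (t+τ)·(F(w) − F(w*)) }. Then F(w⁺) − F(w*) ≤ θ/(t + τ + 1). -/

import Mathlib

local notation "⟪" x ", " y "⟫" => @inner ℝ _ _ x y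

set_option maxHeartbeats 1600000 in
/-- One-round step of Corollary 2 (decreasing learning rate `η = Λ/(t+τ)`): the
update `w⁺ = w − η·(∇F(w) − e)` satisfies `F(w⁺) − F(w*) ≤ θ/(t+τ+1)` with
`θ = max{Λ(t+τ)‖e‖²/(2(Λμ−1)), (t+τ)(F(w) − F(w*))}`. -/
theorem semifl_decreasing_lr_step
    {E : Type*} [NormedAddCommGroup E] [InnerProductSpace ℝ E] [CompleteSpace E]
    (F : E → ℝ) (μ L : ℝ) (hμ : 0 < μ) (hL : 0 < L) (hdiff : Differentiable ℝ F)
    (hsc : ∀ w w' : E,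
      F w ≥ F w' + ⟪w - w', gradient F w'⟫ + μ / 2 * ‖w - w'‖ ^ 2)
    (hsm : ∀ w w' : E,
      F w ≤ F w' + ⟪w - w', gradient F w'⟫ + L / 2 * ‖w - w'‖ ^ 2)
    (wstar : E) (hmin : ∀ w : E, F wstar ≤ F w)
    (Λ τ : ℝ) (hΛ : 0 < Λ) (hτ : 0 < τ) (hΛμ : 1 < Λ * μ) (hτΛL : Λ * L ≤ τ)
    (t : ℕ) (ht : 1 ≤ t)
    (η : ℝ) (hη : η = Λ / ((t : ℝ) + τ))
    (w e : E) (θ : ℝ)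
    (hθ : θ = max (Λ * ((t : ℝ) + τ) * ‖e‖ ^ 2 / (2 * (Λ * μ - 1)))
                  (((t : ℝ) + τ) * (F w - F wstar))) :
    F (w - η • (gradient F w - e)) - F wstar ≤ θ / ((t : ℝ) + τ + 1) := by
  rcases subsingleton_or_nontrivial E with hE | hE
  · have h1 : w - η • (gradient F w - e) = wstar := Subsingleton.elim _ _
    have h2 : w = wstar := Subsingleton.elim _ _
    have h3 : e = (0 : E) := Subsingleton.elim _ _
    rw [h1, hθ, h2, h3]
    simp
  · -- setup
    obtain ⟨g, hg⟩ : ∃ x : E, x = gradient F w := ⟨_, rfl⟩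
    rw [← hg]
    obtain ⟨T, hT⟩ : ∃ x : ℝ, x = (t : ℝ) + τ := ⟨_, rfl⟩
    rw [← hT] at hη hθ ⊢
    have ht1 : (1 : ℝ) ≤ (t : ℝ) := by exact_mod_cast ht
    have hτT : τ < T := by rw [hT]; linarith
    have hTpos : (0 : ℝ) < T := by linarith
    have hη0 : 0 < η := by rw [hη]; positivity
    -- μ ≤ L from combining strong convexity and smoothness at a nonzero vector
    obtain ⟨v, hv⟩ := exists_ne (0 : E)
    have hvn : (0 : ℝ) < ‖v‖ ^ 2 := pow_pos (norm_pos_iff.2 hv) 2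
    have hμL : μ ≤ L := by
      have h1 := hsc (w + v) w
      have h2 := hsm (w + v) w
      have hvv : w + v - w = v := by abel
      rw [hvv] at h1 h2
      nlinarith [h1, h2]
    -- PL inequality
    have hPL : 2 * μ * (F w - F wstar) ≤ ‖g‖ ^ 2 := by
      have h := hsc wstar w
      rw [← hg] at h
      have hexp : ‖μ • (wstar - w) + g‖ ^ 2
          = μ ^ 2 * ‖wstar - w‖ ^ 2 + 2 * (μ * ⟪wstar - w, g⟫) + ‖g‖ ^ 2 := by
        rw [norm_add_sq_real, real_inner_smul_left, norm_smul, Real.norm_eq_abs,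
          mul_pow, sq_abs]
      nlinarith [h, hμ, sq_nonneg ‖μ • (wstar - w) + g‖, hexp]
    -- bounds on η
    have hLη : L * η ≤ 1 := by
      have : L * η = L * Λ / T := by rw [hη]; ring
      rw [this, div_le_one hTpos]
      nlinarith [hτΛL, hτT]
    have hημ : η * μ ≤ 1 := by
      have : η * μ = Λ * μ / T := by rw [hη]; ring
      rw [this, div_le_one hTpos]
      nlinarith [hμL, hΛ, hτΛL, hτT]
    -- smoothness step
    have h := hsm (w - η • (g - e)) w
    rw [← hg] at h
    have hip : ⟪w - η • (g - e) - w, g⟫ = -(η * ⟪g - e, g⟫) := by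
      rw [sub_sub_cancel_left, inner_neg_left, real_inner_smul_left]
    have hnm : ‖w - η • (g - e) - w‖ ^ 2 = η ^ 2 * ‖g - e‖ ^ 2 := by
      rw [sub_sub_cancel_left, norm_neg, norm_smul, Real.norm_eq_abs, mul_pow, sq_abs]
    rw [hip, hnm] at h
    have hexp1 : ⟪g - e, g⟫ = ‖g‖ ^ 2 - ⟪g, e⟫ := by
      rw [inner_sub_left, real_inner_self_eq_norm_sq, real_inner_comm]
    have hexp2 : ‖g - e‖ ^ 2 = ‖g‖ ^ 2 - 2 * ⟪g, e⟫ + ‖e‖ ^ 2 := norm_sub_sq_real g e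
    rw [hexp1, hexp2] at h
    have hX : (0 : ℝ) ≤ ‖g‖ ^ 2 - 2 * ⟪g, e⟫ + ‖e‖ ^ 2 := by
      rw [← hexp2]; positivity
    have hsq' : ∀ X : ℝ, 0 ≤ X → L / 2 * (η ^ 2 * X) ≤ η / 2 * X := by
      intro X hX0
      nlinarith [hLη, hη0, mul_nonneg hη0.le hX0]
    have hsq := hsq' _ hX
    have hstep : F (w - η • (g - e))
        ≤ F w - η / 2 * ‖g‖ ^ 2 + η / 2 * ‖e‖ ^ 2 := by linarith [h, hsq]
    have hstep2 : η * (2 * μ * (F w - F wstar)) ≤ η * ‖g‖ ^ 2 :=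
      mul_le_mul_of_nonneg_left hPL hη0.le
    have hkey : F (w - η • (g - e)) - F wstar
        ≤ (1 - η * μ) * (F w - F wstar) + η / 2 * ‖e‖ ^ 2 := by linarith only [hstep, hstep2, hmin w]
    -- bounds coming from θ
    have hΛμ1 : (0 : ℝ) < Λ * μ - 1 := by linarith
    have h1 : T * (F w - F wstar) ≤ θ := by rw [hθ]; exact le_max_right _ _
    have h2' : Λ * T * ‖e‖ ^ 2 / (2 * (Λ * μ - 1)) ≤ θ := by
      rw [hθ]; exact le_max_left _ _
    have h2 : Λ * T * ‖e‖ ^ 2 ≤ θ * (2 * (Λ * μ - 1)) :=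
      (div_le_iff₀ (by linarith)).1 h2'
    have hθ0 : 0 ≤ θ :=
      le_trans (div_nonneg (by positivity) (by linarith)) h2'
    have hΛμT : Λ * μ ≤ T := by nlinarith [hμL, hΛ, hτΛL, hτT]
    have hA0 : 0 ≤ F w - F wstar := sub_nonneg.2 (hmin w)
    -- final arithmetic
    calc F (w - η • (g - e)) - F wstar
        ≤ (1 - η * μ) * (F w - F wstar) + η / 2 * ‖e‖ ^ 2 := hkey
      _ ≤ θ / (T + 1) := by
          rw [hη, le_div_iff₀ (by positivity : (0 : ℝ) < T + 1),
            ← mul_le_mul_iff_right₀ (show (0 : ℝ) < T ^ 2 by positivity)]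
          have hL' : T ^ 2 * (((1 - Λ / T * μ) * (F w - F wstar)
              + Λ / T / 2 * ‖e‖ ^ 2) * (T + 1))
              = (T + 1) * ((T - Λ * μ) * (T * (F w - F wstar))
                + T * (Λ * ‖e‖ ^ 2) / 2) := by
            field_simp
          rw [hL']
          have fact1 : (T - Λ * μ) * (T * (F w - F wstar)) ≤ (T - Λ * μ) * θ :=
            mul_le_mul_of_nonneg_left h1 (sub_nonneg.2 hΛμT)
          have fact2 : T * (Λ * ‖e‖ ^ 2) / 2 ≤ (Λ * μ - 1) * θ := by linarith
          have fact3 : (T - Λ * μ) * (T * (F w - F wstar)) + T * (Λ * ‖e‖ ^ 2) / 2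
              ≤ (T - 1) * θ := by nlinarith [fact1, fact2]
          have fact4 : (T + 1) * ((T - Λ * μ) * (T * (F w - F wstar)) + T * (Λ * ‖e‖ ^ 2) / 2)
              ≤ (T + 1) * ((T - 1) * θ) :=
            mul_le_mul_of_nonneg_left fact3 (by linarith)
          nlinarith [fact4, hθ0]
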